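/- Let H be a set of homeomorphisms of ℝ and let E ⊆ ℝ be the unique minimal set of H, meaning: E is nonempty, closed, h(E) = E for every h ∈ H, every nonempty closed subset F ⊆ E with h(F) = F for all h ∈ H equals E, and moreover any nonempty closed subset E′ ⊆ ℝ with h(E′) = E′ for all h ∈ H and having no proper nonempty closed H-invariant subset equals E. Let G be a group acting on ℝ by homeomorphisms via ρ : G → Homeo(ℝ), such that the G-action is minimal (every G-orbit is dense in ℝ) and every ρ(γ) commutes with every element of H, i.e. ρ(γ) ∘ h = h ∘ ρ(γ) for all γ ∈ G and h ∈ H. Then E = ℝ. -/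

import Mathlib

/-- If `E` is the unique minimal set of a family `H` of homeomorphisms of `ℝ`
and a group `G` acts minimally on `ℝ` commuting with every element of `H`, then `E = ℝ`. -/
theorem unique_minimal_set_eq_univ_of_commuting_minimal_action
    {G : Type*} [Group G]
    (H : Set (ℝ ≃ₜ ℝ)) (E : Set ℝ)
    -- E is nonempty, closed and H-invariant
    (hEne : E.Nonempty) (hEcl : IsClosed E)
    (hEinv : ∀ h ∈ H, h '' E = E)
    -- E is a minimal set of H
    (hEmin : ∀ F : Set ℝ, F ⊆ E → F.Nonempty → IsClosed F → (∀ h ∈ H, h '' F = F) → F = E)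
    -- E is the unique minimal set of H
    (hEuniq : ∀ E' : Set ℝ, E'.Nonempty → IsClosed E' → (∀ h ∈ H, h '' E' = E') →
      (∀ F : Set ℝ, F ⊆ E' → F.Nonempty → IsClosed F → (∀ h ∈ H, h '' F = F) → F = E') →
      E' = E)
    -- the action of G
    (ρ : G → ℝ ≃ₜ ℝ)
    (hρ : ∀ γ γ' : G, ∀ x : ℝ, ρ (γ * γ') x = ρ γ (ρ γ' x))
    (hGmin : ∀ x : ℝ, Dense {y : ℝ | ∃ γ : G, ρ γ x = y})
    -- every ρ(γ) commutes with every element of H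
    (hcomm : ∀ (γ : G), ∀ h ∈ H, ∀ x : ℝ, ρ γ (h x) = h (ρ γ x)) :
    E = Set.univ := by
  -- ρ 1 is the identity
  have hρ1 : ∀ x : ℝ, ρ 1 x = x := by
    intro x
    have h1 : ρ (1 * 1 : G) x = ρ 1 (ρ 1 x) := hρ 1 1 x
    rw [one_mul] at h1
    exact ((ρ 1).injective h1).symm
  have hinv : ∀ γ : G, ∀ x : ℝ, ρ γ⁻¹ (ρ γ x) = x := by
    intro γ x
    rw [← hρ, inv_mul_cancel, hρ1]
  -- images commute: h '' (ρ γ '' S) = ρ γ '' (h '' S)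
  have himg : ∀ γ : G, ∀ h ∈ H, ∀ S : Set ℝ,
      (h : ℝ → ℝ) '' ((ρ γ : ℝ → ℝ) '' S) = (ρ γ : ℝ → ℝ) '' ((h : ℝ → ℝ) '' S) := by
    intro γ h hh S
    have hfun : (h : ℝ → ℝ) ∘ (ρ γ : ℝ → ℝ) = (ρ γ : ℝ → ℝ) ∘ (h : ℝ → ℝ) := by
      funext x
      exact (hcomm γ h hh x).symm
    rw [← Set.image_comp, hfun, Set.image_comp]
  -- key: ρ γ '' E = E for all γ
  have hGE : ∀ γ : G, (ρ γ : ℝ → ℝ) '' E = E := by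
    intro γ
    apply hEuniq
    · exact hEne.image _
    · exact (ρ γ).isClosedMap E hEcl
    · intro h hh
      rw [himg γ h hh, hEinv h hh]
    · intro F hFsub hFne hFcl hFinv
      have hback : (ρ γ⁻¹ : ℝ → ℝ) '' ((ρ γ : ℝ → ℝ) '' E) = E := by
        rw [← Set.image_comp]
        have : (ρ γ⁻¹ : ℝ → ℝ) ∘ (ρ γ : ℝ → ℝ) = id := funext fun x => hinv γ x
        rw [this, Set.image_id]
      have h1 : (ρ γ⁻¹ : ℝ → ℝ) '' F = E := by
        apply hEmin
        · rw [← hback]; exact Set.image_mono hFsub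
        · exact hFne.image _
        · exact (ρ γ⁻¹).isClosedMap F hFcl
        · intro h hh
          rw [himg γ⁻¹ h hh, hFinv h hh]
      have h2 : (ρ γ : ℝ → ℝ) '' ((ρ γ⁻¹ : ℝ → ℝ) '' F) = F := by
        rw [← Set.image_comp]
        have : (ρ γ : ℝ → ℝ) ∘ (ρ γ⁻¹ : ℝ → ℝ) = id := by
          funext x
          have := hinv γ⁻¹ x
          rwa [inv_inv] at this
        rw [this, Set.image_id]
      rw [← h2, h1]
  -- take a point of E; its G-orbit is in E and dense
  obtain ⟨x, hx⟩ := hEne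
  have horb : {y : ℝ | ∃ γ : G, ρ γ x = y} ⊆ E := by
    rintro y ⟨γ, rfl⟩
    rw [← hGE γ]
    exact Set.mem_image_of_mem _ hx
  have : (Set.univ : Set ℝ) ⊆ E := by
    have := (hGmin x).closure_eq
    calc (Set.univ : Set ℝ) = closure {y : ℝ | ∃ γ : G, ρ γ x = y} := this.symm
      _ ⊆ closure E := closure_mono horb
      _ = E := hEcl.closure_eq
  exact Set.eq_univ_of_univ_subset this
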